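/- Every disjoint coNP pair is polynomially reducible to the canonical disjoint coNP pair of some TFNP problem. -/
import Mathlib

def nlen (x : ℕ) : ℕ := Nat.size x

structure TFNPpb (PTR : (ℕ → ℕ → Prop) → Prop) where
  p : Polynomial ℕ
  R : ℕ → ℕ → Prop
  dec : PTR R
  total : ∀ x, ∃ y, nlen y ≤ p.eval (nlen x) ∧ R x y

def Sol {PTR} (A : TFNPpb PTR) (x y : ℕ) : Prop :=
  nlen y ≤ A.p.eval (nlen x) ∧ A.R x y

def CanonMem {PTR} (ceval : ℕ → ℕ → Bool) (A : TFNPpb PTR) (i : Bool) (u : ℕ) : Prop :=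
  ∀ y, Sol A (Nat.unpair u).1 y → ceval (Nat.unpair u).2 y = i

def CoNPMem (r : Bool → Polynomial ℕ) (β : Bool → ℕ → ℕ → Prop) (i : Bool) (x : ℕ) : Prop :=
  ∀ y, nlen y ≤ (r i).eval (nlen x) → β i x y

def Rdef (r : Bool → Polynomial ℕ) (β : Bool → ℕ → ℕ → Prop) (x z : ℕ) : Prop :=
  ∃ i : Bool, (Nat.unpair z).1 = (if i then 1 else 0) ∧
    nlen (Nat.unpair z).2 ≤ (r i).eval (nlen x) ∧ ¬ β i x (Nat.unpair z).2

lemma pair_nlen (a y : ℕ) (ha : a ≤ 1) : nlen (Nat.pair a y) ≤ 2 * nlen y + 4 := by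
  have hy : y < 2 ^ nlen y := Nat.lt_size_self y
  have hbound : Nat.pair a y ≤ y * y + y + 3 := by
    unfold Nat.pair
    split
    · nlinarith
    · have : y ≤ a := le_of_not_gt (by assumption)
      nlinarith
  rw [nlen, Nat.size_le]
  calc Nat.pair a y ≤ y * y + y + 3 := hbound
    _ < 2 ^ nlen y * 2 ^ nlen y + 2 ^ nlen y + 4 := by nlinarith
    _ ≤ 2 ^ (2 * nlen y + 4) := by
        rw [pow_add, two_mul, pow_add]
        have h1 : 1 ≤ 2 ^ nlen y := Nat.one_le_two_pow
        nlinarith [pow_pos (by norm_num : (0:ℕ) < 2) (nlen y)]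

theorem disjoint_coNP_pair_reduces_to_canonical
    (PTR : (ℕ → ℕ → Prop) → Prop)
    (PTF : (ℕ → ℕ) → Prop)
    (ceval : ℕ → ℕ → Bool)
    (r : Bool → Polynomial ℕ) (β : Bool → ℕ → ℕ → Prop)
    (hdec : ∀ i, PTR (β i))
    (hdisj : ∀ x, ¬ (CoNPMem r β false x ∧ CoNPMem r β true x))
    (hRdec : PTR (Rdef r β))
    (C0 : ℕ) (hC0 : ∀ z, ceval C0 z = ((Nat.unpair z).1 == 0))
    (hpt : PTF (fun x => Nat.pair x C0)) :
    ∃ P : TFNPpb PTR, (∀ x z, P.R x z ↔ Rdef r β x z) ∧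
      PTF (fun x => Nat.pair x C0) ∧
      ∀ (i : Bool) (x : ℕ), CoNPMem r β i x → CanonMem ceval P i (Nat.pair x C0) := by
  have hple : ∀ (i : Bool) (n : ℕ),
      (r i).eval n ≤ (r false + r true).eval n := by
    intro i n
    cases i <;> simp [Polynomial.eval_add] <;> omega
  refine ⟨⟨2 * (r false + r true) + Polynomial.C 4, Rdef r β, hRdec, ?_⟩, fun _ _ => Iff.rfl,
    hpt, ?_⟩
  · intro x
    have := hdisj x
    have : (¬ CoNPMem r β false x) ∨ (¬ CoNPMem r β true x) := by tauto
    obtain ⟨i, hi⟩ : ∃ i, ¬ CoNPMem r β i x := by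
      rcases this with h | h
      exacts [⟨false, h⟩, ⟨true, h⟩]
    simp only [CoNPMem, not_forall] at hi
    obtain ⟨y, hy, hβ⟩ := hi
    refine ⟨Nat.pair (if i then 1 else 0) y, ?_, ⟨i, ?_, ?_, ?_⟩⟩
    · have h1 := pair_nlen (if i then 1 else 0) y (by cases i <;> simp)
      have h2 : nlen y ≤ (r i).eval (nlen x) := hy
      have h3 := hple i (nlen x)
      calc nlen (Nat.pair (if i then 1 else 0) y) ≤ 2 * nlen y + 4 := h1
        _ ≤ 2 * (r false + r true).eval (nlen x) + 4 := by omega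
        _ ≤ _ := by simp [Polynomial.eval_add]
    · simp
    · simpa using hy
    · simpa using hβ
  · intro i x hx z hz
    obtain ⟨_, j, hj1, hj2, hj3⟩ := hz
    simp only [Nat.unpair_pair] at hj1 hj2 hj3 ⊢
    rw [hC0, hj1]
    have hij : j ≠ i := by
      rintro rfl
      exact hj3 (hx _ hj2)
    cases i <;> cases j <;> simp_all
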